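/- Strong finitary model property of JD_CS: for every axiomatically appropriate constant specification CS for JD there exist computable functions f, g, h : ℕ → ℕ such that for every formula A not derivable in the Hilbert system JD_CS there is a finitary Fitting model M = (W,R,E,ν) for JD_CS, with E the minimal admissible evidence relation containing a finite base B, and a world w ∈ W with M,w ⊮ A, |W| ≤ f(|A|), |B| ≤ g(|A|), and |{(w,p) : w ∈ ν(p)}| ≤ h(|A|), where |A| denotes the number of symbols of A and |·| denotes cardinality. -/

import Mathlib

namespace JustificationLogic

/-- Justification terms: constants, variables, application, sum, and proof checker `!`. -/
inductive Term : Type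
  | const : ℕ → Term
  | var : ℕ → Term
  | app : Term → Term → Term
  | sum : Term → Term → Term
  | bang : Term → Term
  deriving DecidableEq

/-- Formulas of justification logic: atoms, negation, implication, and `t : A`. -/
inductive Formula : Type
  | atom : ℕ → Formula
  | neg : Formula → Formula
  | impl : Formula → Formula → Formula
  | just : Term → Formula → Formula
  deriving DecidableEq

/-- Disjunction, defined classically: `A ∨ B := ¬A → B`. -/
def Formula.or (A B : Formula) : Formula := (Formula.neg A).impl B

/-- Falsum, defined as the negation of a propositional tautology. -/
def Formula.falsum : Formula := Formula.neg ((Formula.atom 0).impl (Formula.atom 0))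

/-- Number of symbols of a term. -/
def Term.size : Term → ℕ
  | .const _ => 1
  | .var _ => 1
  | .app s t => s.size + t.size + 1
  | .sum s t => s.size + t.size + 1
  | .bang t => t.size + 1

/-- Number of symbols of a formula. -/
def Formula.size : Formula → ℕ
  | .atom _ => 1
  | .neg A => A.size + 1
  | .impl A B => A.size + B.size + 1
  | .just t A => t.size + A.size + 1

/-- An explicit numerical code for terms (an injective Gödel numbering). -/
def Term.code : Term → ℕ
  | .const n => Nat.pair 0 n
  | .var n => Nat.pair 1 n
  | .app s t => Nat.pair 2 (Nat.pair s.code t.code)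
  | .sum s t => Nat.pair 3 (Nat.pair s.code t.code)
  | .bang t => Nat.pair 4 t.code

/-- An explicit numerical code for formulas (an injective Gödel numbering). -/
def Formula.code : Formula → ℕ
  | .atom n => Nat.pair 0 n
  | .neg A => Nat.pair 1 A.code
  | .impl A B => Nat.pair 2 (Nat.pair A.code B.code)
  | .just t A => Nat.pair 3 (Nat.pair t.code A.code)

/-- Substitution of terms for term variables. -/
def Term.subst (σ : ℕ → Term) : Term → Term
  | .const n => .const n
  | .var n => σ n
  | .app s t => .app (s.subst σ) (t.subst σ)
  | .sum s t => .sum (s.subst σ) (t.subst σ)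
  | .bang t => .bang (t.subst σ)

/-- Simultaneous substitution of terms for term variables and formulas for atoms. -/
def Formula.subst (σ : ℕ → Term) (τ : ℕ → Formula) : Formula → Formula
  | .atom n => τ n
  | .neg A => .neg (A.subst σ τ)
  | .impl A B => .impl (A.subst σ τ) (B.subst σ τ)
  | .just t A => .just (t.subst σ) (A.subst σ τ)

/-- `towerT c n = !ⁿc`. -/
def towerT (c : Term) : ℕ → Term
  | 0 => c
  | n + 1 => Term.bang (towerT c n)

/-- `towerF c A n = !ⁿ⁻¹c : ⋯ : !c : c : A` (and `A` for `n = 0`), so that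
`(towerT c n) : (towerF c A n)` is the `n`-th formula produced by the rule (AN!). -/
def towerF (c : Term) (A : Formula) : ℕ → Formula
  | 0 => A
  | n + 1 => Formula.just (towerT c n) (towerF c A n)

/-- The axioms of the justification logics considered, with switches `hd`, `ht`, `h4`
for the axioms (jd), (jt), (j4).  The propositional part (A1) is given by three
standard Hilbert-style schemes axiomatizing classical propositional logic. -/
inductive Ax (hd ht h4 : Bool) : Formula → Prop
  | k (A B : Formula) : Ax hd ht h4 (A.impl (B.impl A))
  | s (A B C : Formula) :
      Ax hd ht h4 ((A.impl (B.impl C)).impl ((A.impl B).impl (A.impl C)))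
  | dn (A B : Formula) :
      Ax hd ht h4 (((A.neg).impl (B.neg)).impl (B.impl A))
  | a2 (t s : Term) (A B : Formula) :
      Ax hd ht h4 ((Formula.just t (A.impl B)).impl
        ((Formula.just s A).impl (Formula.just (Term.app t s) B)))
  | a3 (t s : Term) (A : Formula) :
      Ax hd ht h4 (((Formula.just t A).or (Formula.just s A)).impl
        (Formula.just (Term.sum t s) A))
  | jd (t : Term) : hd = true →
      Ax hd ht h4 ((Formula.just t Formula.falsum).impl Formula.falsum)
  | jt (t : Term) (A : Formula) : ht = true →
      Ax hd ht h4 ((Formula.just t A).impl A)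
  | j4 (t : Term) (A : Formula) : h4 = true →
      Ax hd ht h4 ((Formula.just t A).impl
        (Formula.just (Term.bang t) (Formula.just t A)))

/-- Axioms of the respective logics. -/
def AxJ : Formula → Prop := Ax false false false
def AxJT : Formula → Prop := Ax false true false
def AxJD : Formula → Prop := Ax true false false
def AxJ4 : Formula → Prop := Ax false false true
def AxJD4 : Formula → Prop := Ax true false true
def AxLP : Formula → Prop := Ax false true true

/-- `CS` is a constant specification for the logic with axioms `Axm`:
every member of `CS` is of the form `c : A` with `c` a constant and `A` an axiom. -/
def ConstSpec (Axm : Formula → Prop) (CS : Set Formula) : Prop :=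
  ∀ F ∈ CS, ∃ (c : ℕ) (A : Formula), F = Formula.just (Term.const c) A ∧ Axm A

/-- `CS` is axiomatically appropriate for axioms `Axm`:
for every axiom `A` there is a constant `c` with `c : A ∈ CS`. -/
def AxApprop (Axm : Formula → Prop) (CS : Set Formula) : Prop :=
  ∀ A : Formula, Axm A → ∃ c : ℕ, Formula.just (Term.const c) A ∈ CS

/-- `CS` is schematic: the set of axioms justified by a given constant consists of
axiom schemes, i.e. it is closed under simultaneous substitution of terms for term
variables and formulas for atomic propositions. -/
def Schematic (CS : Set Formula) : Prop :=
  ∀ (c : ℕ) (A : Formula), Formula.just (Term.const c) A ∈ CS →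
    ∀ (σ : ℕ → Term) (τ : ℕ → Formula),
      Formula.just (Term.const c) (A.subst σ τ) ∈ CS

/-- `CS` is decidable: some computable function decides membership in `CS`
(via the explicit Gödel numbering of formulas). -/
def DecidableCS (CS : Set Formula) : Prop :=
  ∃ C : ℕ → Bool, Computable C ∧ ∀ F : Formula, F ∈ CS ↔ C F.code = true

/-- Hilbert-style derivability with the iterated axiom necessitation rule (AN!):
from `c : A ∈ CS` infer `!ⁿc : !ⁿ⁻¹c : ⋯ : !c : c : A` for every `n ≥ 0`. -/
inductive DerivB (Axm : Formula → Prop) (CS : Set Formula) : Formula → Prop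
  | ax {A : Formula} : Axm A → DerivB Axm CS A
  | mp {A B : Formula} : DerivB Axm CS (A.impl B) → DerivB Axm CS A → DerivB Axm CS B
  | an (c : ℕ) (A : Formula) (n : ℕ) :
      Formula.just (Term.const c) A ∈ CS →
      DerivB Axm CS (Formula.just (towerT (Term.const c) n) (towerF (Term.const c) A n))

/-- Hilbert-style derivability with the simple axiom necessitation rule (AN):
from `c : A ∈ CS` infer `c : A`. -/
inductive DerivS (Axm : Formula → Prop) (CS : Set Formula) : Formula → Prop
  | ax {A : Formula} : Axm A → DerivS Axm CS A
  | mp {A B : Formula} : DerivS Axm CS (A.impl B) → DerivS Axm CS A → DerivS Axm CS B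
  | an (c : ℕ) (A : Formula) :
      Formula.just (Term.const c) A ∈ CS →
      DerivS Axm CS (Formula.just (Term.const c) A)

/-- A structure for Fitting models: a nonempty set of worlds, an accessibility
relation, an evidence relation and a valuation. -/
structure Model : Type 1 where
  World : Type
  nonempty : Nonempty World
  R : World → World → Prop
  E : Term → Formula → World → Prop
  val : ℕ → World → Prop

/-- The satisfaction relation `M, w ⊩ A`. -/
def Sat (M : Model) : Formula → M.World → Prop
  | .atom n, w => M.val n w
  | .neg A, w => ¬ Sat M A w
  | .impl A B, w => Sat M A w → Sat M B w
  | .just t A, w => M.E t A w ∧ ∀ v : M.World, M.R w v → Sat M A v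

/-- The evidence relation of a model, as a set of triples. -/
def EvSet (M : Model) : Set (Term × Formula × M.World) :=
  {x | M.E x.1 x.2.1 x.2.2}

/-- The graph of the valuation: the set `{(w, p) | w ∈ ν(p)}`. -/
def ValSet (M : Model) : Set (M.World × ℕ) :=
  {p | M.val p.2 p.1}

/-- Seriality of a relation: every world has a successor. -/
def Serial {W : Type} (R : W → W → Prop) : Prop := ∀ w : W, ∃ v : W, R w v

/-- Admissible evidence relation for the logics without the (j4) axiom:
closure under sum and application, and the constant specification condition
with iterated `!`. -/
def AdmissibleBang (CS : Set Formula) {W : Type}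
    (E : Set (Term × Formula × W)) : Prop :=
  (∀ (s t : Term) (A : Formula) (w : W),
      ((s, A, w) ∈ E ∨ (t, A, w) ∈ E) → (Term.sum s t, A, w) ∈ E) ∧
  (∀ (s t : Term) (A B : Formula) (w : W),
      (s, A.impl B, w) ∈ E → (t, A, w) ∈ E → (Term.app s t, B, w) ∈ E) ∧
  (∀ (c : ℕ) (A : Formula) (w : W) (n : ℕ),
      Formula.just (Term.const c) A ∈ CS →
      (towerT (Term.const c) n, towerF (Term.const c) A n, w) ∈ E)

/-- Admissible evidence relation for the logics with the (j4) axiom: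
closure under sum and application, the simple constant specification condition,
closure under `!`, and monotonicity along the accessibility relation. -/
def AdmissibleJ4 (CS : Set Formula) {W : Type} (R : W → W → Prop)
    (E : Set (Term × Formula × W)) : Prop :=
  (∀ (s t : Term) (A : Formula) (w : W),
      ((s, A, w) ∈ E ∨ (t, A, w) ∈ E) → (Term.sum s t, A, w) ∈ E) ∧
  (∀ (s t : Term) (A B : Formula) (w : W),
      (s, A.impl B, w) ∈ E → (t, A, w) ∈ E → (Term.app s t, B, w) ∈ E) ∧
  (∀ (c : ℕ) (A : Formula) (w : W),
      Formula.just (Term.const c) A ∈ CS → (Term.const c, A, w) ∈ E) ∧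
  (∀ (t : Term) (A : Formula) (w : W),
      (t, A, w) ∈ E → (Term.bang t, Formula.just t A, w) ∈ E) ∧
  (∀ (t : Term) (A : Formula) (w v : W),
      (t, A, w) ∈ E → R w v → (t, A, v) ∈ E)

/-- `M` is a Fitting model for `J_CS`. -/
def IsModelJ (CS : Set Formula) (M : Model) : Prop :=
  AdmissibleBang CS (EvSet M)

/-- `M` is a Fitting model for `JT_CS`: additionally `R` is reflexive. -/
def IsModelJT (CS : Set Formula) (M : Model) : Prop :=
  Reflexive M.R ∧ AdmissibleBang CS (EvSet M)

/-- `M` is a Fitting model for `JD_CS`: additionally `R` is serial. -/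
def IsModelJD (CS : Set Formula) (M : Model) : Prop :=
  Serial M.R ∧ AdmissibleBang CS (EvSet M)

/-- `M` is a Fitting model for `J4_CS`: `R` is transitive. -/
def IsModelJ4 (CS : Set Formula) (M : Model) : Prop :=
  Transitive M.R ∧ AdmissibleJ4 CS M.R (EvSet M)

/-- `M` is a Fitting model for `JD4_CS`: `R` is serial and transitive. -/
def IsModelJD4 (CS : Set Formula) (M : Model) : Prop :=
  Serial M.R ∧ Transitive M.R ∧ AdmissibleJ4 CS M.R (EvSet M)

/-- `M` is a Fitting model for `LP_CS`: `R` is reflexive and transitive. -/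
def IsModelLP (CS : Set Formula) (M : Model) : Prop :=
  Reflexive M.R ∧ Transitive M.R ∧ AdmissibleJ4 CS M.R (EvSet M)

/-- `B` is a base for the evidence relation of `M`, and that evidence relation is
minimal (least) among the admissible ones (non-(j4) version) containing `B`. -/
def MinBaseBang (CS : Set Formula) (M : Model)
    (B : Set (Term × Formula × M.World)) : Prop :=
  B ⊆ EvSet M ∧
  ∀ E' : Set (Term × Formula × M.World),
    AdmissibleBang CS E' → B ⊆ E' → EvSet M ⊆ E'

/-- `B` is a base for the evidence relation of `M`, and that evidence relation is
minimal (least) among the admissible ones ((j4) version) containing `B`. -/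
def MinBaseJ4 (CS : Set Formula) (M : Model)
    (B : Set (Term × Formula × M.World)) : Prop :=
  B ⊆ EvSet M ∧
  ∀ E' : Set (Term × Formula × M.World),
    AdmissibleJ4 CS M.R E' → B ⊆ E' → EvSet M ⊆ E'

/-- `M` is finitary (non-(j4) version): finitely many worlds, the evidence relation
is the minimal admissible one over some finite base, and the valuation has finite graph. -/
def FinitaryBang (CS : Set Formula) (M : Model) : Prop :=
  Finite M.World ∧
  (∃ B : Set (Term × Formula × M.World), B.Finite ∧ MinBaseBang CS M B) ∧
  (ValSet M).Finite

/-- `M` is finitary ((j4) version): finitely many worlds, the evidence relation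
is the minimal admissible one over some finite base, and the valuation has finite graph. -/
def FinitaryJ4 (CS : Set Formula) (M : Model) : Prop :=
  Finite M.World ∧
  (∃ B : Set (Term × Formula × M.World), B.Finite ∧ MinBaseJ4 CS M B) ∧
  (ValSet M).Finite

/-! ### Auxiliary development -/

/-- Derivability from a set of hypotheses in `JD_CS`. -/
inductive DerivC (CS : Set Formula) : Set Formula → Formula → Prop
  | ax {Γ A} : AxJD A → DerivC CS Γ A
  | hyp {Γ A} : A ∈ Γ → DerivC CS Γ A
  | mp {Γ A B} : DerivC CS Γ (A.impl B) → DerivC CS Γ A → DerivC CS Γ B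
  | an {Γ} (c : ℕ) (A : Formula) (n : ℕ) : Formula.just (Term.const c) A ∈ CS →
      DerivC CS Γ (Formula.just (towerT (Term.const c) n) (towerF (Term.const c) A n))

namespace DerivC

variable {CS : Set Formula} {Γ Γ' : Set Formula} {A B C : Formula}

theorem weaken (h : DerivC CS Γ A) (hsub : Γ ⊆ Γ') : DerivC CS Γ' A := by
  induction h with
  | ax h => exact .ax h
  | hyp h => exact .hyp (hsub h)
  | mp _ _ ih1 ih2 => exact .mp ih1 ih2
  | an c A n h => exact .an c A n h

theorem toB (h : DerivC CS ∅ A) : DerivB AxJD CS A := by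
  induction h with
  | ax h => exact .ax h
  | hyp h => exact absurd h (Set.notMem_empty _)
  | mp _ _ ih1 ih2 => exact .mp ih1 ih2
  | an c A n h => exact .an c A n h

theorem ofB (h : DerivB AxJD CS A) : DerivC CS Γ A := by
  induction h with
  | ax h => exact .ax h
  | mp _ _ ih1 ih2 => exact .mp ih1 ih2
  | an c A n h => exact .an c A n h

theorem axk : DerivC CS Γ (A.impl (B.impl A)) := .ax (Ax.k A B)

theorem axs : DerivC CS Γ ((A.impl (B.impl C)).impl ((A.impl B).impl (A.impl C))) :=
  .ax (Ax.s A B C)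

theorem axdn : DerivC CS Γ (((A.neg).impl (B.neg)).impl (B.impl A)) := .ax (Ax.dn A B)

theorem did : DerivC CS Γ (A.impl A) :=
  .mp (.mp (axs (B := A.impl A)) axk) axk

theorem deduction (h : DerivC CS (insert A Γ) B) : DerivC CS Γ (A.impl B) := by
  induction h with
  | ax h => exact .mp axk (.ax h)
  | hyp h =>
    rcases h with h | h
    · exact h ▸ did
    · exact .mp axk (.hyp h)
  | mp _ _ ih1 ih2 => exact .mp (.mp axs ih1) ih2
  | an c A n h => exact .mp axk (.an c A n h)

theorem hyp_insert : DerivC CS (insert A Γ) A := .hyp (Set.mem_insert _ _)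

theorem undeduction (h : DerivC CS Γ (A.impl B)) : DerivC CS (insert A Γ) B :=
  .mp (h.weaken (Set.subset_insert _ _)) hyp_insert

/-- Ex falso: `¬A → (A → B)`. -/
theorem efq (h1 : DerivC CS Γ A.neg) (h2 : DerivC CS Γ A) : DerivC CS Γ B :=
  .mp (.mp axdn (.mp axk h1)) h2

theorem dne : DerivC CS Γ (A.neg.neg.impl A) := by
  apply deduction
  have hnn : DerivC CS (insert A.neg.neg Γ) A.neg.neg := hyp_insert
  have h1 : DerivC CS (insert A.neg.neg Γ) (A.neg.impl (Formula.falsum)) := by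
    apply deduction
    exact efq (hnn.weaken (Set.subset_insert _ _)) hyp_insert
  have h2 : DerivC CS (insert A.neg.neg Γ)
      ((((Formula.atom 0).impl (Formula.atom 0)).impl A)) := .mp axdn h1
  exact .mp h2 did

/-- From `Γ, A ⊢ ⊥` conclude `Γ ⊢ ¬A`. -/
theorem negIntro (h : DerivC CS (insert A Γ) Formula.falsum) : DerivC CS Γ A.neg := by
  have h1 : DerivC CS Γ (A.impl Formula.falsum) := deduction h
  have h2 : DerivC CS Γ (A.neg.neg.impl Formula.falsum) := by
    apply deduction
    exact .mp (h1.weaken (Set.subset_insert _ _)) (.mp dne hyp_insert)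
  exact .mp (.mp axdn h2) did

/-- From `Γ, ¬A ⊢ ⊥` conclude `Γ ⊢ A`. -/
theorem byContra (h : DerivC CS (insert A.neg Γ) Formula.falsum) : DerivC CS Γ A :=
  .mp dne (negIntro h)

theorem negImpl_left (h : DerivC CS Γ (A.impl B).neg) : DerivC CS Γ A := by
  apply byContra
  have hAB : DerivC CS (insert A.neg Γ) (A.impl B) := by
    apply deduction
    exact efq (hyp_insert.weaken (Set.subset_insert _ _)) hyp_insert
  exact efq (h.weaken (Set.subset_insert _ _)) hAB

theorem negImpl_right (h : DerivC CS Γ (A.impl B).neg) : DerivC CS Γ B.neg := by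
  apply negIntro
  have hAB : DerivC CS (insert B Γ) (A.impl B) := .mp axk hyp_insert
  exact efq (h.weaken (Set.subset_insert _ _)) hAB

theorem orIntro_left (h : DerivC CS Γ A) : DerivC CS Γ (A.or B) := by
  apply deduction
  exact efq hyp_insert (h.weaken (Set.subset_insert _ _))

theorem orIntro_right (h : DerivC CS Γ B) : DerivC CS Γ (A.or B) :=
  .mp axk h

/-- Finite character of derivability. -/
theorem finite_character (h : DerivC CS Γ A) :
    ∃ Γ₀ : Set Formula, Γ₀ ⊆ Γ ∧ Γ₀.Finite ∧ DerivC CS Γ₀ A := by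
  induction h with
  | ax h => exact ⟨∅, Set.empty_subset _, Set.finite_empty, .ax h⟩
  | @hyp B h =>
    exact ⟨{B}, Set.singleton_subset_iff.2 h, Set.finite_singleton _, .hyp rfl⟩
  | mp _ _ ih1 ih2 =>
    obtain ⟨Γ₁, hs1, hf1, hd1⟩ := ih1
    obtain ⟨Γ₂, hs2, hf2, hd2⟩ := ih2
    exact ⟨Γ₁ ∪ Γ₂, Set.union_subset hs1 hs2, hf1.union hf2,
      .mp (hd1.weaken Set.subset_union_left) (hd2.weaken Set.subset_union_right)⟩
  | an c A n h => exact ⟨∅, Set.empty_subset _, Set.finite_empty, .an c A n h⟩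

end DerivC

/-- Consistency of a set of hypotheses. -/
def Con (CS Γ : Set Formula) : Prop := ¬ DerivC CS Γ Formula.falsum

/-- Maximal consistent sets. -/
def MCS (CS Γ : Set Formula) : Prop :=
  Con CS Γ ∧ ∀ A : Formula, A ∉ Γ → ¬ Con CS (insert A Γ)

namespace MCS

variable {CS Γ : Set Formula} {A B : Formula}

theorem mem_of_deriv (h : MCS CS Γ) (hd : DerivC CS Γ A) : A ∈ Γ := by
  by_contra hA
  exact h.1 (.mp (DerivC.deduction (not_not.1 (h.2 A hA))) hd)

theorem neg_mem (h : MCS CS Γ) (hA : A ∉ Γ) : A.neg ∈ Γ := by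
  refine h.mem_of_deriv (DerivC.negIntro ?_)
  exact not_not.1 (h.2 A hA)

theorem not_mem_of_neg (h : MCS CS Γ) (hA : A.neg ∈ Γ) : A ∉ Γ := fun hA' =>
  h.1 (DerivC.efq (.hyp hA) (.hyp hA'))

theorem neg_mem_iff (h : MCS CS Γ) : A.neg ∈ Γ ↔ A ∉ Γ :=
  ⟨h.not_mem_of_neg, h.neg_mem⟩

theorem impl_mem_iff (h : MCS CS Γ) : A.impl B ∈ Γ ↔ (A ∈ Γ → B ∈ Γ) := by
  constructor
  · exact fun hi hA => h.mem_of_deriv (.mp (.hyp hi) (.hyp hA))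
  · intro hi
    by_cases hA : A ∈ Γ
    · exact h.mem_of_deriv (.mp DerivC.axk (.hyp (hi hA)))
    · exact h.mem_of_deriv (DerivC.deduction
        (DerivC.efq (DerivC.weaken (.hyp (h.neg_mem hA)) (Set.subset_insert _ _))
          DerivC.hyp_insert))

end MCS

/-- Chains of consistent sets have consistent unions (via finite character). -/
theorem con_sUnion_chain {CS : Set Formula} {c : Set (Set Formula)}
    (hc : IsChain (· ⊆ ·) c) (hne : c.Nonempty) (hcon : ∀ Δ ∈ c, Con CS Δ) :
    Con CS (⋃₀ c) := by
  intro hd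
  obtain ⟨Γ₀, hsub, hfin, hd₀⟩ := DerivC.finite_character hd
  -- find a member of the chain containing Γ₀
  suffices hs : ∃ Δ ∈ c, Γ₀ ⊆ Δ by
    obtain ⟨Δ, hΔ, hΓΔ⟩ := hs
    exact hcon Δ hΔ (hd₀.weaken hΓΔ)
  clear hd₀ hd
  revert hsub
  refine Set.Finite.induction_on
    (motive := fun s _ => s ⊆ ⋃₀ c → ∃ Δ ∈ c, s ⊆ Δ) _ hfin ?_ ?_
  · intro _
    obtain ⟨Δ, hΔ⟩ := hne
    exact ⟨Δ, hΔ, Set.empty_subset _⟩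
  · intro a s _ _ ih hsub
    obtain ⟨Δ, hΔ, hsΔ⟩ := ih (fun x hx => hsub (Set.mem_insert_of_mem _ hx))
    obtain ⟨Δ', hΔ', haΔ'⟩ := hsub (Set.mem_insert a s)
    rcases hc.total hΔ hΔ' with hle | hle
    · exact ⟨Δ', hΔ', Set.insert_subset haΔ' (hsΔ.trans hle)⟩
    · exact ⟨Δ, hΔ, Set.insert_subset (hle haΔ') hsΔ⟩

/-- Lindenbaum's lemma. -/
theorem lindenbaum {CS Γ : Set Formula} (h : Con CS Γ) :
    ∃ Δ : Set Formula, Γ ⊆ Δ ∧ MCS CS Δ := by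
  obtain ⟨m, hm, hmax⟩ := zorn_subset_nonempty {Δ : Set Formula | Con CS Δ}
    (fun c hc hchain hne => ⟨⋃₀ c, con_sUnion_chain hchain hne (fun Δ hΔ => hc hΔ),
      fun s hs => Set.subset_sUnion_of_mem hs⟩) Γ h
  refine ⟨m, hm, hmax.1, fun A hA hcon => hA ?_⟩
  have := hmax.2 hcon (Set.subset_insert A m)
  exact this (Set.mem_insert A m)

/-- Internalization: derivable formulas have justifications. -/
theorem internalize {CS : Set Formula} (hApp : AxApprop AxJD CS) {A : Formula}
    (h : DerivC CS ∅ A) : ∃ t : Term, DerivC CS ∅ (Formula.just t A) := by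
  induction h with
  | @ax A h =>
    obtain ⟨c, hc⟩ := hApp A h
    exact ⟨Term.const c, DerivC.an c A 0 hc⟩
  | hyp h => exact absurd h (Set.notMem_empty _)
  | @mp A B _ _ ih1 ih2 =>
    obtain ⟨t, ht⟩ := ih1
    obtain ⟨s, hs⟩ := ih2
    exact ⟨Term.app t s, .mp (.mp (.ax (Ax.a2 t s A B)) ht) hs⟩
  | an c A n h => exact ⟨towerT (Term.const c) (n + 1), DerivC.an c A (n + 1) h⟩

/-- Lifting: from a finite set of justified hypotheses to a justified conclusion. -/
theorem lift {CS Γ : Set Formula} (hApp : AxApprop AxJD CS) (hM : MCS CS Γ)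
    {Δ : Set Formula} (hfin : Δ.Finite)
    (hΔ : Δ ⊆ {B | ∃ t : Term, Formula.just t B ∈ Γ}) :
    ∀ C : Formula, DerivC CS Δ C → ∃ s : Term, Formula.just s C ∈ Γ := by
  refine Set.Finite.induction_on
    (motive := fun Δ _ => Δ ⊆ {B | ∃ t : Term, Formula.just t B ∈ Γ} →
      ∀ C : Formula, DerivC CS Δ C → ∃ s : Term, Formula.just s C ∈ Γ)
    _ hfin ?_ ?_ hΔ
  · intro _ C hC
    obtain ⟨t, ht⟩ := internalize hApp hC
    exact ⟨t, hM.mem_of_deriv (ht.weaken (Set.empty_subset _))⟩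
  · intro B Δ' _ _ ih hΔ' C hC
    obtain ⟨s, hs⟩ := ih (fun x hx => hΔ' (Set.mem_insert_of_mem _ hx)) (B.impl C)
      (DerivC.deduction hC)
    obtain ⟨u, hu⟩ := hΔ' (Set.mem_insert B Δ')
    exact ⟨Term.app s u, hM.mem_of_deriv
      (.mp (.mp (.ax (Ax.a2 s u B C)) (.hyp hs)) (.hyp hu))⟩

/-- The canonical model for `JD_CS`. -/
noncomputable def canModel (CS : Set Formula)
    (W0 : Set Formula) (hW0 : MCS CS W0) : Model where
  World := {Γ : Set Formula // MCS CS Γ}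
  nonempty := ⟨⟨W0, hW0⟩⟩
  R Γ Δ := ∀ (t : Term) (A : Formula), Formula.just t A ∈ Γ.1 → A ∈ Δ.1
  E t A Γ := Formula.just t A ∈ Γ.1
  val n Γ := Formula.atom n ∈ Γ.1

section Canonical

variable {CS : Set Formula} (hApp : AxApprop AxJD CS)
variable {W0 : Set Formula} (hW0 : MCS CS W0)

include hApp in
theorem canModel_serial : Serial (canModel CS W0 hW0).R := by
  rintro ⟨Γ, hΓ⟩
  have hcon : Con CS {B | ∃ t : Term, Formula.just t B ∈ Γ} := by
    intro hd
    obtain ⟨Δ₀, hsub, hfin, hd₀⟩ := DerivC.finite_character hd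
    obtain ⟨s, hs⟩ := lift hApp hΓ hfin hsub Formula.falsum hd₀
    exact hΓ.1 (.mp (.ax (Ax.jd s rfl)) (.hyp hs))
  obtain ⟨Δ, hΔsub, hΔ⟩ := lindenbaum hcon
  exact ⟨⟨Δ, hΔ⟩, fun t A hA => hΔsub ⟨t, hA⟩⟩

theorem canModel_admissible : AdmissibleBang CS (EvSet (canModel CS W0 hW0)) := by
  refine ⟨?_, ?_, ?_⟩
  · rintro s t A ⟨Γ, hΓ⟩ (h | h)
    · exact hΓ.mem_of_deriv (.mp (.ax (Ax.a3 s t A)) (DerivC.orIntro_left (.hyp h)))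
    · exact hΓ.mem_of_deriv (.mp (.ax (Ax.a3 s t A)) (DerivC.orIntro_right (.hyp h)))
  · rintro s t A B ⟨Γ, hΓ⟩ h1 h2
    exact hΓ.mem_of_deriv (.mp (.mp (.ax (Ax.a2 s t A B)) (.hyp h1)) (.hyp h2))
  · rintro c A ⟨Γ, hΓ⟩ n h
    exact hΓ.mem_of_deriv (.an c A n h)

theorem canModel_truth : ∀ (B : Formula) (Γ : (canModel CS W0 hW0).World),
    Sat (canModel CS W0 hW0) B Γ ↔ B ∈ Γ.1 := by
  intro B
  induction B with
  | atom n => exact fun Γ => Iff.rfl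
  | neg B ih =>
    intro Γ
    rw [show Sat (canModel CS W0 hW0) B.neg Γ = ¬ Sat (canModel CS W0 hW0) B Γ from rfl,
      ih Γ]
    exact Γ.2.neg_mem_iff.symm
  | impl B C ihB ihC =>
    intro Γ
    rw [show Sat (canModel CS W0 hW0) (B.impl C) Γ =
      (Sat (canModel CS W0 hW0) B Γ → Sat (canModel CS W0 hW0) C Γ) from rfl,
      ihB Γ, ihC Γ]
    exact Γ.2.impl_mem_iff.symm
  | just t B ih =>
    intro Γ
    constructor
    · rintro ⟨hE, _⟩
      exact hE
    · intro h
      exact ⟨h, fun Δ hR => (ih Δ).2 (hR t B h)⟩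

theorem completeness {A : Formula} (hA : ¬ DerivB AxJD CS A) :
    ∃ (W0 : Set Formula) (hW0 : MCS CS W0),
      ∃ w : (canModel CS W0 hW0).World, ¬ Sat (canModel CS W0 hW0) A w := by
  have hcon : Con CS {A.neg} := by
    intro hd
    exact hA (DerivC.toB (DerivC.byContra
      (hd.weaken (by simp [Set.singleton_subset_iff]))))
  obtain ⟨Δ, hsub, hΔ⟩ := lindenbaum hcon
  refine ⟨Δ, hΔ, ⟨Δ, hΔ⟩, fun hsat => ?_⟩
  have hmem : A ∈ Δ := (canModel_truth hΔ A ⟨Δ, hΔ⟩).1 hsat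
  exact hΔ.not_mem_of_neg (hsub rfl) hmem

end Canonical

/-- The set of subformulas of a formula. -/
def Formula.sub : Formula → Finset Formula
  | .atom n => {.atom n}
  | .neg A => insert (Formula.neg A) A.sub
  | .impl A B => insert (A.impl B) (A.sub ∪ B.sub)
  | .just t A => insert (Formula.just t A) A.sub

theorem Formula.self_mem_sub : ∀ A : Formula, A ∈ A.sub
  | .atom _ => Finset.mem_singleton_self _
  | .neg _ => Finset.mem_insert_self _ _
  | .impl _ _ => Finset.mem_insert_self _ _
  | .just _ _ => Finset.mem_insert_self _ _

theorem Formula.sub_sub : ∀ A B : Formula, B ∈ A.sub → B.sub ⊆ A.sub := by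
  intro A
  induction A with
  | atom n =>
    intro B hB
    rw [Formula.sub, Finset.mem_singleton] at hB
    subst hB; exact Finset.Subset.refl _
  | neg A ih =>
    intro B hB
    rw [Formula.sub, Finset.mem_insert] at hB
    rcases hB with h | h
    · subst h; exact Finset.Subset.refl _
    · exact (ih B h).trans (Finset.subset_insert _ _)
  | impl A₁ A₂ ih₁ ih₂ =>
    intro B hB
    rw [Formula.sub, Finset.mem_insert, Finset.mem_union] at hB
    rcases hB with h | h | h
    · subst h; exact Finset.Subset.refl _
    · exact (ih₁ B h).trans ((Finset.subset_union_left).trans (Finset.subset_insert _ _))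
    · exact (ih₂ B h).trans ((Finset.subset_union_right).trans (Finset.subset_insert _ _))
  | just t A ih =>
    intro B hB
    rw [Formula.sub, Finset.mem_insert] at hB
    rcases hB with h | h
    · subst h; exact Finset.Subset.refl _
    · exact (ih B h).trans (Finset.subset_insert _ _)

theorem Formula.card_sub_le_size : ∀ A : Formula, A.sub.card ≤ A.size := by
  intro A
  induction A with
  | atom n => simp [Formula.sub, Formula.size]
  | neg A ih =>
    calc (Formula.neg A).sub.card ≤ A.sub.card + 1 := Finset.card_insert_le _ _
    _ ≤ A.size + 1 := by omega
  | impl A₁ A₂ ih₁ ih₂ =>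
    calc (A₁.impl A₂).sub.card ≤ (A₁.sub ∪ A₂.sub).card + 1 := Finset.card_insert_le _ _
    _ ≤ A₁.sub.card + A₂.sub.card + 1 := by
        have := Finset.card_union_le A₁.sub A₂.sub; omega
    _ ≤ A₁.size + A₂.size + 1 := by omega
  | just t A ih =>
    calc (Formula.just t A).sub.card ≤ A.sub.card + 1 := Finset.card_insert_le _ _
    _ ≤ t.size + A.size + 1 := by omega

/-- The closure of a base under the admissibility conditions. -/
inductive Clo (CS : Set Formula) {W : Type} (Bs : Set (Term × Formula × W)) :
    Term → Formula → W → Prop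
  | base {t A w} : (t, A, w) ∈ Bs → Clo CS Bs t A w
  | suml {s t A w} : Clo CS Bs s A w → Clo CS Bs (Term.sum s t) A w
  | sumr {s t A w} : Clo CS Bs t A w → Clo CS Bs (Term.sum s t) A w
  | app {s t A B w} : Clo CS Bs s (A.impl B) w → Clo CS Bs t A w →
      Clo CS Bs (Term.app s t) B w
  | an {w} (c : ℕ) (A : Formula) (n : ℕ) : Formula.just (Term.const c) A ∈ CS →
      Clo CS Bs (towerT (Term.const c) n) (towerF (Term.const c) A n) w

theorem clo_admissible (CS : Set Formula) {W : Type} (Bs : Set (Term × Formula × W)) :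
    AdmissibleBang CS {x : Term × Formula × W | Clo CS Bs x.1 x.2.1 x.2.2} := by
  refine ⟨?_, ?_, ?_⟩
  · rintro s t A w (h | h)
    · exact Clo.suml h
    · exact Clo.sumr h
  · intro s t A B w h1 h2
    exact Clo.app h1 h2
  · intro c A w n h
    exact Clo.an c A n h

theorem clo_minimal {CS : Set Formula} {W : Type} {Bs : Set (Term × Formula × W)}
    {E' : Set (Term × Formula × W)} (hE' : AdmissibleBang CS E') (hBs : Bs ⊆ E') :
    ∀ {t A w}, Clo CS Bs t A w → (t, A, w) ∈ E' := by
  intro t A w h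
  induction h with
  | base h => exact hBs h
  | suml _ ih => exact hE'.1 _ _ _ _ (Or.inl ih)
  | sumr _ ih => exact hE'.1 _ _ _ _ (Or.inr ih)
  | app _ _ ih1 ih2 => exact hE'.2.1 _ _ _ _ _ ih1 ih2
  | an c A n h => exact hE'.2.2 c A _ n h

section Filtration

variable (CS : Set Formula) (M0 : Model) (A : Formula)

/-- Worlds of the filtrated model: valuations on the subformulas of `A`
realized by some world of `M0`. -/
def FWorld : Type :=
  {g : ↥A.sub → Bool // ∃ w : M0.World, ∀ B : ↥A.sub, g B = true ↔ Sat M0 B.1 w}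

instance : Finite (FWorld M0 A) := Subtype.finite

open Classical in
/-- The canonical map from worlds of `M0` to filtrated worlds. -/
noncomputable def theta (w : M0.World) : FWorld M0 A :=
  ⟨fun B => decide (Sat M0 B.1 w), ⟨w, fun B => by simp⟩⟩

theorem theta_spec (w : M0.World) (B : ↥A.sub) :
    (theta M0 A w).1 B = true ↔ Sat M0 B.1 w := by
  simp [theta]

/-- A representative world of `M0` for each filtrated world. -/
noncomputable def frep (c : FWorld M0 A) : M0.World := c.2.choose

theorem frep_spec (c : FWorld M0 A) (B : ↥A.sub) :
    c.1 B = true ↔ Sat M0 B.1 (frep M0 A c) := c.2.choose_spec B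

theorem theta_frep (c : FWorld M0 A) : theta M0 A (frep M0 A c) = c := by
  refine Subtype.ext (funext fun B => ?_)
  have h : (theta M0 A (frep M0 A c)).1 B = true ↔ c.1 B = true :=
    (theta_spec M0 A _ B).trans (frep_spec M0 A c B).symm
  revert h
  cases (theta M0 A (frep M0 A c)).1 B <;> cases c.1 B <;> simp

theorem agree (w : M0.World) {B : Formula} (hB : B ∈ A.sub) :
    Sat M0 B (frep M0 A (theta M0 A w)) ↔ Sat M0 B w :=
  (frep_spec M0 A (theta M0 A w) ⟨B, hB⟩).symm.trans (theta_spec M0 A w ⟨B, hB⟩)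

theorem eq_agree {w w' : M0.World} (h : theta M0 A w = theta M0 A w')
    {B : Formula} (hB : B ∈ A.sub) : Sat M0 B w ↔ Sat M0 B w' :=
  (theta_spec M0 A w ⟨B, hB⟩).symm.trans ((h ▸ rfl : (theta M0 A w).1 ⟨B, hB⟩ =
    (theta M0 A w').1 ⟨B, hB⟩) ▸ theta_spec M0 A w' ⟨B, hB⟩)

/-- The base of the evidence relation of the filtrated model. -/
def FBase : Set (Term × Formula × FWorld M0 A) :=
  {x | Formula.just x.1 x.2.1 ∈ A.sub ∧ M0.E x.1 x.2.1 (frep M0 A x.2.2)}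

/-- The filtrated model. -/
noncomputable def FModel : Model where
  World := FWorld M0 A
  nonempty := ⟨theta M0 A (Classical.choice M0.nonempty)⟩
  R c d := ∃ w v : M0.World, theta M0 A w = c ∧ theta M0 A v = d ∧ M0.R w v
  E t B c := Clo CS (FBase M0 A) t B c
  val n c := Formula.atom n ∈ A.sub ∧ M0.val n (frep M0 A c)

variable {CS M0}

theorem fmodel_isModelJD (hM0 : IsModelJD CS M0) : IsModelJD CS (FModel CS M0 A) := by
  constructor
  · intro c
    obtain ⟨v, hv⟩ := hM0.1 (frep M0 A c)
    exact ⟨theta M0 A v, frep M0 A c, v, theta_frep M0 A c, rfl, hv⟩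
  · exact clo_admissible CS (FBase M0 A)

theorem clo_sub_E0 (hM0 : IsModelJD CS M0) {t : Term} {B : Formula} {c : FWorld M0 A}
    (h : Clo CS (FBase M0 A) t B c) : M0.E t B (frep M0 A c) := by
  have hadm : AdmissibleBang CS
      {x : Term × Formula × FWorld M0 A | M0.E x.1 x.2.1 (frep M0 A x.2.2)} := by
    obtain ⟨h1, h2, h3⟩ := hM0.2
    exact ⟨fun s t A' w hw => h1 s t A' (frep M0 A w) hw,
      fun s t A' B' w h h' => h2 s t A' B' (frep M0 A w) h h',
      fun c' A' w n h => h3 c' A' (frep M0 A w) n h⟩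
  exact clo_minimal hadm (fun x hx => hx.2) h

theorem fmodel_truth (hM0 : IsModelJD CS M0) :
    ∀ B : Formula, B ∈ A.sub → ∀ w : M0.World,
      Sat (FModel CS M0 A) B (theta M0 A w) ↔ Sat M0 B w := by
  intro B
  induction B with
  | atom n =>
    intro hB w
    show (Formula.atom n ∈ A.sub ∧ M0.val n (frep M0 A (theta M0 A w))) ↔ M0.val n w
    rw [show M0.val n w ↔ Sat M0 (Formula.atom n) w from Iff.rfl, ← agree M0 A w hB]
    exact ⟨fun h => h.2, fun h => ⟨hB, h⟩⟩
  | neg B ih =>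
    intro hB w
    have hB' : B ∈ A.sub :=
      Formula.sub_sub A B.neg hB (Finset.mem_insert_of_mem (Formula.self_mem_sub B))
    exact not_congr (ih hB' w)
  | impl B C ihB ihC =>
    intro hB w
    have hB' : B ∈ A.sub := Formula.sub_sub A (B.impl C) hB
      (Finset.mem_insert_of_mem (Finset.mem_union_left _ (Formula.self_mem_sub B)))
    have hC' : C ∈ A.sub := Formula.sub_sub A (B.impl C) hB
      (Finset.mem_insert_of_mem (Finset.mem_union_right _ (Formula.self_mem_sub C)))
    exact imp_congr (ihB hB' w) (ihC hC' w)
  | just t B ih =>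
    intro hB w
    have hB' : B ∈ A.sub :=
      Formula.sub_sub A (Formula.just t B) hB
        (Finset.mem_insert_of_mem (Formula.self_mem_sub B))
    constructor
    · rintro ⟨hE, hsucc⟩
      rw [← agree M0 A w hB]
      refine ⟨clo_sub_E0 A hM0 hE, fun v hv => ?_⟩
      have hR' : (FModel CS M0 A).R (theta M0 A w) (theta M0 A v) :=
        ⟨frep M0 A (theta M0 A w), v, theta_frep M0 A _, rfl, hv⟩
      exact (ih hB' v).1 (hsucc (theta M0 A v) hR')
    · intro hsat
      have hsat' : Sat M0 (Formula.just t B) (frep M0 A (theta M0 A w)) :=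
        (agree M0 A w hB).2 hsat
      refine ⟨Clo.base ⟨hB, hsat'.1⟩, ?_⟩
      rintro d ⟨w', v', hw', hd, hR⟩
      have hsatw' : Sat M0 (Formula.just t B) w' :=
        (eq_agree M0 A hw'.symm hB).1 hsat
      have : Sat M0 B v' := hsatw'.2 v' hR
      exact hd ▸ (ih hB' v').2 this

end Filtration

section Counting

variable (M0 : Model) (A : Formula)

theorem fworld_card_le : Nat.card (FWorld M0 A) ≤ 2 ^ A.size :=
  calc Nat.card (FWorld M0 A) ≤ Nat.card (↥A.sub → Bool) :=
        Nat.card_le_card_of_injective Subtype.val Subtype.val_injective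
  _ = 2 ^ A.sub.card := by simp [Nat.card_eq_fintype_card]
  _ ≤ 2 ^ A.size := Nat.pow_le_pow_right (by norm_num) (Formula.card_sub_le_size A)

/-- Injection of the base into subformulas times worlds. -/
def fbaseInj (x : ↥(FBase M0 A)) : ↥A.sub × FWorld M0 A :=
  (⟨Formula.just x.1.1 x.1.2.1, x.2.1⟩, x.1.2.2)

theorem fbaseInj_injective : Function.Injective (fbaseInj M0 A) := by
  rintro ⟨⟨t, B, c⟩, hx⟩ ⟨⟨t', B', c'⟩, hy⟩ h
  simp only [fbaseInj, Prod.mk.injEq, Subtype.mk.injEq, Formula.just.injEq] at h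
  obtain ⟨⟨ht, hB⟩, hc⟩ := h
  subst ht; subst hB; subst hc
  rfl

theorem fbase_finite : (FBase M0 A).Finite :=
  Set.finite_coe_iff.mp (Finite.of_injective _ (fbaseInj_injective M0 A))

theorem fbase_card_le : (FBase M0 A).ncard ≤ A.size * 2 ^ A.size :=
  calc (FBase M0 A).ncard = Nat.card ↥(FBase M0 A) := rfl
  _ ≤ Nat.card (↥A.sub × FWorld M0 A) :=
      Nat.card_le_card_of_injective _ (fbaseInj_injective M0 A)
  _ = A.sub.card * Nat.card (FWorld M0 A) := by
      rw [Nat.card_prod]; simp [Nat.card_eq_fintype_card]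
  _ ≤ A.size * 2 ^ A.size :=
      Nat.mul_le_mul (Formula.card_sub_le_size A) (fworld_card_le M0 A)

variable (CS : Set Formula)

/-- Injection of the valuation graph into worlds times subformulas. -/
def fvalInj (x : ↥(ValSet (FModel CS M0 A))) : FWorld M0 A × ↥A.sub :=
  (x.1.1, ⟨Formula.atom x.1.2, x.2.1⟩)

theorem fvalInj_injective : Function.Injective (fvalInj M0 A CS) := by
  rintro ⟨⟨c, n⟩, hx⟩ ⟨⟨c', n'⟩, hy⟩ h
  simp only [fvalInj, Prod.mk.injEq, Subtype.mk.injEq, Formula.atom.injEq] at h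
  obtain ⟨hc, hn⟩ := h
  subst_vars
  rfl

theorem fval_finite : (ValSet (FModel CS M0 A)).Finite :=
  Set.finite_coe_iff.mp (Finite.of_injective _ (fvalInj_injective M0 A CS))

theorem fval_card_le : (ValSet (FModel CS M0 A)).ncard ≤ A.size * 2 ^ A.size :=
  calc (ValSet (FModel CS M0 A)).ncard
      = Nat.card ↥(ValSet (FModel CS M0 A)) := rfl
  _ ≤ Nat.card (FWorld M0 A × ↥A.sub) :=
      Nat.card_le_card_of_injective _ (fvalInj_injective M0 A CS)
  _ = Nat.card (FWorld M0 A) * A.sub.card := by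
      rw [Nat.card_prod]; simp [Nat.card_eq_fintype_card]
  _ ≤ 2 ^ A.size * A.size :=
      Nat.mul_le_mul (fworld_card_le M0 A) (Formula.card_sub_le_size A)
  _ = A.size * 2 ^ A.size := Nat.mul_comm _ _

theorem fbase_minBase : MinBaseBang CS (FModel CS M0 A) (FBase M0 A) := by
  constructor
  · intro x hx
    exact Clo.base hx
  · intro E' hadm hsub x hx
    exact clo_minimal hadm hsub hx

end Counting

/-- Strong finitary model property of `JD_CS`: for an axiomatically appropriate constant
specification `CS` there are computable functions `f, g, h` such that every formula `A`
not derivable in `JD_CS` fails at some world of a finitary Fitting model for `JD_CS`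
whose set of worlds, finite evidence base, and valuation graph are bounded in size by
`f |A|`, `g |A|`, and `h |A|` respectively. -/
theorem strong_finitary_model_property_JD (CS : Set Formula)
    (hCS : ConstSpec AxJD CS) (hApp : AxApprop AxJD CS) :
    ∃ f g h : ℕ → ℕ, Computable f ∧ Computable g ∧ Computable h ∧
      ∀ A : Formula, ¬ DerivB AxJD CS A →
        ∃ M : Model, IsModelJD CS M ∧
          Finite M.World ∧ (ValSet M).Finite ∧
          (∃ B : Set (Term × Formula × M.World),
            B.Finite ∧ MinBaseBang CS M B ∧ B.ncard ≤ g A.size) ∧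
          (∃ w : M.World, ¬ Sat M A w) ∧
          Nat.card M.World ≤ f A.size ∧
          (ValSet M).ncard ≤ h A.size := by
  have hp : Primrec₂ ((· ^ ·) : ℕ → ℕ → ℕ) := Primrec₂.unpaired'.1 Nat.Primrec.pow
  have h2 : Primrec (fun n : ℕ => 2 ^ n) := hp.comp (Primrec.const 2) Primrec.id
  refine ⟨fun n => 2 ^ n, fun n => n * 2 ^ n, fun n => n * 2 ^ n,
    h2.to_comp, (Primrec.nat_mul.comp Primrec.id h2).to_comp,
    (Primrec.nat_mul.comp Primrec.id h2).to_comp, ?_⟩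
  intro A hA
  obtain ⟨W0, hW0, w0, hw0⟩ := completeness hA
  have hM0 : IsModelJD CS (canModel CS W0 hW0) :=
    ⟨canModel_serial hApp hW0, canModel_admissible hW0⟩
  exact ⟨FModel CS (canModel CS W0 hW0) A, fmodel_isModelJD A hM0,
    inferInstanceAs (Finite (FWorld (canModel CS W0 hW0) A)),
    fval_finite (canModel CS W0 hW0) A CS,
    ⟨FBase (canModel CS W0 hW0) A, fbase_finite _ A, fbase_minBase _ A CS,
      fbase_card_le _ A⟩,
    ⟨theta (canModel CS W0 hW0) A w0, fun hsat => hw0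
      ((fmodel_truth A hM0 A (Formula.self_mem_sub A) w0).1 hsat)⟩,
    fworld_card_le _ A, fval_card_le _ A CS⟩

end JustificationLogic
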